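/- For all integers n and k with 2 ≤ k < n, the numbers f_{n,k} satisfy the recurrence f_{n,k} = Σ_{m=1}^{n−2} ( C(n−1, m) − 1 ) · f_{m, k−1}, where C(a,b) denotes the binomial coefficient. -/

import Mathlib

open Finset

/-- The word of a permutation `σ` of `Fin n`: the letter at (0-based) position `i`,
viewed as a natural number (the letters are `0, 1, ..., n-1`, identified with the usual
letters `1, ..., n`); junk value `0` outside the range. -/
def entry {n : ℕ} (σ : Equiv.Perm (Fin n)) (i : ℕ) : ℕ :=
  if h : i < n then (σ ⟨i, h⟩ : ℕ) else 0

/-- Position `i` starts a run of the word `w`: either `i = 0`, or there is a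
descent at position `i - 1`. -/
def WordRunStart (w : ℕ → ℕ) (i : ℕ) : Prop :=
  i = 0 ∨ w i < w (i - 1)

instance (w : ℕ → ℕ) (i : ℕ) : Decidable (WordRunStart w i) :=
  inferInstanceAs (Decidable (i = 0 ∨ w i < w (i - 1)))

/-- The number of runs of the length-`m` word `w` (maximal consecutive increasing subwords). -/
def wordRuns (w : ℕ → ℕ) (m : ℕ) : ℕ :=
  ((Finset.range m).filter fun i => WordRunStart w i).card

/-- The length-`m` word `w` is flattened: the first entries of its runs,
read from left to right, increase. -/
def WordFlattened (w : ℕ → ℕ) (m : ℕ) : Prop :=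
  ∀ i < m, ∀ j < m, WordRunStart w i → WordRunStart w j → i < j → w i < w j

instance (w : ℕ → ℕ) (m : ℕ) : Decidable (WordFlattened w m) :=
  inferInstanceAs (Decidable (∀ i < m, ∀ j < m,
    WordRunStart w i → WordRunStart w j → i < j → w i < w j))

/-- Position `i` (0-based) starts a run of the permutation `σ`. -/
def IsRunStart {n : ℕ} (σ : Equiv.Perm (Fin n)) (i : ℕ) : Prop :=
  i < n ∧ WordRunStart (entry σ) i

instance {n : ℕ} (σ : Equiv.Perm (Fin n)) (i : ℕ) : Decidable (IsRunStart σ i) :=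
  inferInstanceAs (Decidable (i < n ∧ WordRunStart (entry σ) i))

/-- The number of runs of the permutation `σ`. -/
def runCount {n : ℕ} (σ : Equiv.Perm (Fin n)) : ℕ :=
  wordRuns (entry σ) n

/-- `σ` is a flattened partition. -/
def IsFlattened {n : ℕ} (σ : Equiv.Perm (Fin n)) : Prop :=
  WordFlattened (entry σ) n

instance {n : ℕ} (σ : Equiv.Perm (Fin n)) : Decidable (IsFlattened σ) :=
  inferInstanceAs (Decidable (WordFlattened (entry σ) n))

/-- `flatSet n k`: the set `F_{n,k}` of flattened partitions over `[n]` with exactly `k` runs. -/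
def flatSet (n k : ℕ) : Finset (Equiv.Perm (Fin n)) :=
  Finset.univ.filter fun σ => IsFlattened σ ∧ runCount σ = k

/-- `f n k = |F_{n,k}|`, the number of flattened partitions over `[n]` with exactly `k` runs. -/
def f (n k : ℕ) : ℕ := (flatSet n k).card
-- helpers part 1
section Helpers

lemma entry_lt {n : ℕ} (σ : Equiv.Perm (Fin n)) {i : ℕ} (h : i < n) : entry σ i < n := by
  simp only [entry, dif_pos h]
  exact (σ ⟨i, h⟩).isLt

lemma entry_injOn {n : ℕ} (σ : Equiv.Perm (Fin n)) {i j : ℕ} (hi : i < n) (hj : j < n)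
    (h : entry σ i = entry σ j) : i = j := by
  simp only [entry, dif_pos hi, dif_pos hj] at h
  have := σ.injective (Fin.val_injective h)
  simpa [Fin.ext_iff] using this

lemma wordRunStart_congr {v w : ℕ → ℕ} {n i : ℕ} (h : ∀ j < n, v j = w j) (hi : i < n) :
    (WordRunStart v i ↔ WordRunStart w i) := by
  rcases Nat.eq_zero_or_pos i with h0 | h0
  · simp [WordRunStart, h0]
  · unfold WordRunStart
    rw [h i hi, h (i - 1) (by omega)]

lemma wordRuns_congr {v w : ℕ → ℕ} {n : ℕ} (h : ∀ j < n, v j = w j) :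
    wordRuns v n = wordRuns w n := by
  unfold wordRuns
  congr 1
  apply Finset.filter_congr
  intro i hi
  rw [Finset.mem_range] at hi
  simp only [wordRunStart_congr h hi]

lemma wordFlattened_congr {v w : ℕ → ℕ} {n : ℕ} (h : ∀ j < n, v j = w j) :
    (WordFlattened v n ↔ WordFlattened w n) := by
  unfold WordFlattened
  constructor
  · intro H i hi j hj ri rj hij
    rw [← h i hi, ← h j hj]
    exact H i hi j hj ((wordRunStart_congr h hi).mpr ri) ((wordRunStart_congr h hj).mpr rj) hij
  · intro H i hi j hj ri rj hij
    rw [h i hi, h j hj]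
    exact H i hi j hj ((wordRunStart_congr h hi).mp ri) ((wordRunStart_congr h hj).mp rj) hij

lemma flattened_entry_zero {n : ℕ} (σ : Equiv.Perm (Fin n)) (hn : 0 < n) (h : IsFlattened σ) :
    entry σ 0 = 0 := by
  by_contra h0
  set p : Fin n := σ.symm ⟨0, hn⟩ with hpdef
  have hp : entry σ (p : ℕ) = 0 := by
    simp only [entry, dif_pos p.isLt, Fin.eta, hpdef]
    simp
  have hpne : (p : ℕ) ≠ 0 := by
    intro hh
    rw [hh] at hp
    exact h0 hp
  have hrs : WordRunStart (entry σ) (p : ℕ) := by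
    right
    rw [hp]
    rcases Nat.eq_zero_or_pos (entry σ ((p : ℕ) - 1)) with hz | hz
    · exfalso
      have := entry_injOn σ (by omega : (p:ℕ) - 1 < n) p.isLt (hz.trans hp.symm)
      omega
    · exact hz
  have := h 0 hn (p : ℕ) p.isLt (Or.inl rfl) hrs (by omega)
  omega

lemma sorted_getD_lt {L : List ℕ} (hL : L.Pairwise (· < ·)) {i j : ℕ}
    (hj : j < L.length) (hij : i < j) : L.getD i 0 < L.getD j 0 := by
  rw [List.getD_eq_getElem _ _ (lt_trans hij hj), List.getD_eq_getElem _ _ hj]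
  exact List.pairwise_iff_getElem.mp hL i j _ _ hij

lemma sorted_getD_lt_iff {L : List ℕ} (hL : L.Pairwise (· < ·)) {i j : ℕ}
    (hi : i < L.length) (hj : j < L.length) : (L.getD i 0 < L.getD j 0 ↔ i < j) := by
  constructor
  · intro h
    by_contra hn
    push_neg at hn
    rcases Nat.lt_or_ge j i with hji | hji
    · exact absurd (sorted_getD_lt hL hi hji) (by omega)
    · have : i = j := by omega
      subst this; omega
  · exact sorted_getD_lt hL hj

lemma sorted_getD_inj {L : List ℕ} (hL : L.Pairwise (· < ·)) {i j : ℕ}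
    (hi : i < L.length) (hj : j < L.length) (h : L.getD i 0 = L.getD j 0) : i = j := by
  have h1 := sorted_getD_lt_iff hL hi hj
  have h2 := sorted_getD_lt_iff hL hj hi
  omega

end Helpers
section Build

variable (n m : ℕ) (S : Finset ℕ) (τ : Equiv.Perm (Fin m))

/-- sorted list of the complement values (first-run values). -/
def cList : List ℕ := ((Finset.range n) \ S).sort (· ≤ ·)

/-- sorted list of `S`. -/
def sList : List ℕ := S.sort (· ≤ ·)

/-- the word of the permutation built from the data `(m, S, τ)`. -/
def wrd : ℕ → ℕ := fun i =>
  if i < n - m then (cList n S).getD i 0 else (sList S).getD (entry τ (i - (n - m))) 0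

variable {n m S τ}

lemma S_subset_range (hm2 : m + 2 ≤ n) (hS : S ⊆ Finset.Icc 1 (n-1)) : S ⊆ Finset.range n := by
  intro x hx
  have := hS hx
  rw [Finset.mem_Icc] at this
  rw [Finset.mem_range]
  omega

lemma cList_length (hm2 : m + 2 ≤ n) (hS : S ⊆ Finset.Icc 1 (n-1)) (hc : S.card = m) :
    (cList n S).length = n - m := by
  unfold cList
  rw [Finset.length_sort, Finset.card_sdiff_of_subset (S_subset_range hm2 hS), Finset.card_range, hc]

lemma sList_length (hc : S.card = m) : (sList S).length = m := by
  unfold sList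
  rw [Finset.length_sort, hc]

lemma cList_sorted : (cList n S).Pairwise (· < ·) := (Finset.sortedLT_sort _).pairwise

lemma sList_sorted : (sList S).Pairwise (· < ·) := (Finset.sortedLT_sort _).pairwise

lemma cList_getD_mem (hm2 : m + 2 ≤ n) (hS : S ⊆ Finset.Icc 1 (n-1)) (hc : S.card = m)
    {i : ℕ} (hi : i < n - m) : (cList n S).getD i 0 ∈ Finset.range n \ S := by
  have hlen : i < (cList n S).length := by rw [cList_length hm2 hS hc]; omega
  rw [List.getD_eq_getElem _ _ hlen]
  have := List.getElem_mem hlen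
  unfold cList at this
  rwa [Finset.mem_sort] at this

lemma sList_getD_mem (hc : S.card = m) {i : ℕ} (hi : i < m) : (sList S).getD i 0 ∈ S := by
  have hlen : i < (sList S).length := by rw [sList_length hc]; omega
  rw [List.getD_eq_getElem _ _ hlen]
  have := List.getElem_mem hlen
  unfold sList at this
  rwa [Finset.mem_sort] at this

lemma cList_getD_zero (hm2 : m + 2 ≤ n) (hS : S ⊆ Finset.Icc 1 (n-1)) (hc : S.card = m) :
    (cList n S).getD 0 0 = 0 := by
  have h0 : (0 : ℕ) ∈ Finset.range n \ S := by
    rw [Finset.mem_sdiff, Finset.mem_range]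
    refine ⟨by omega, fun h => ?_⟩
    have := hS h
    rw [Finset.mem_Icc] at this
    omega
  rw [← Finset.mem_sort (α := ℕ) (· ≤ ·)] at h0
  rw [show ((Finset.range n \ S).sort (· ≤ ·)) = cList n S from rfl] at h0
  obtain ⟨j, hj, hjeq⟩ := List.mem_iff_getElem.mp h0
  rcases Nat.eq_zero_or_pos j with rfl | hjp
  · rw [List.getD_eq_getElem _ _ hj, hjeq]
  · have := sorted_getD_lt (cList_sorted (n := n) (S := S)) hj hjp
    rw [List.getD_eq_getElem _ _ hj, hjeq] at this
    omega

lemma entry_tau_lt {j : ℕ} (hj : j < m) : entry τ j < m := entry_lt τ hj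

lemma wrd_left {i : ℕ} (hi : i < n - m) : wrd n m S τ i = (cList n S).getD i 0 := if_pos hi

lemma wrd_right {i : ℕ} (hi : n - m ≤ i) :
    wrd n m S τ i = (sList S).getD (entry τ (i - (n - m))) 0 := if_neg (by omega)

lemma wrd_right_mem (hm2 : m + 2 ≤ n) (hc : S.card = m) {i : ℕ} (hi1 : n - m ≤ i) (hi2 : i < n) :
    wrd n m S τ i ∈ S := by
  rw [wrd_right hi1]
  exact sList_getD_mem hc (entry_lt τ (by omega))

lemma wrd_lt (hm2 : m + 2 ≤ n) (hS : S ⊆ Finset.Icc 1 (n-1)) (hc : S.card = m)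
    {i : ℕ} (hi : i < n) : wrd n m S τ i < n := by
  rcases Nat.lt_or_ge i (n - m) with h | h
  · rw [wrd_left h]
    have := cList_getD_mem hm2 hS hc h
    rw [Finset.mem_sdiff, Finset.mem_range] at this
    exact this.1
  · have := hS (wrd_right_mem (τ := τ) hm2 hc h hi)
    rw [Finset.mem_Icc] at this
    omega

lemma wrd_injOn (hm2 : m + 2 ≤ n) (hS : S ⊆ Finset.Icc 1 (n-1)) (hc : S.card = m)
    {i j : ℕ} (hi : i < n) (hj : j < n) (h : wrd n m S τ i = wrd n m S τ j) : i = j := by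
  rcases Nat.lt_or_ge i (n - m) with h1 | h1 <;> rcases Nat.lt_or_ge j (n - m) with h2 | h2
  · rw [wrd_left h1, wrd_left h2] at h
    exact sorted_getD_inj cList_sorted (by rw [cList_length hm2 hS hc]; omega)
      (by rw [cList_length hm2 hS hc]; omega) h
  · exfalso
    rw [wrd_left h1] at h
    have hmem := cList_getD_mem hm2 hS hc h1
    rw [h] at hmem
    rw [Finset.mem_sdiff] at hmem
    exact hmem.2 (wrd_right_mem hm2 hc h2 hj)
  · exfalso
    rw [wrd_left h2] at h
    have hmem := cList_getD_mem hm2 hS hc h2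
    rw [← h] at hmem
    rw [Finset.mem_sdiff] at hmem
    exact hmem.2 (wrd_right_mem hm2 hc h1 hi)
  · rw [wrd_right h1, wrd_right h2] at h
    have e1 : entry τ (i - (n - m)) < m := entry_lt τ (by omega)
    have e2 : entry τ (j - (n - m)) < m := entry_lt τ (by omega)
    have := sorted_getD_inj sList_sorted (by rw [sList_length hc]; omega)
      (by rw [sList_length hc]; omega) h
    have := entry_injOn τ (by omega : i - (n - m) < m) (by omega : j - (n - m) < m) this
    omega

/-- the permutation built from the data `(m, S, τ)`. -/
noncomputable def buildPerm (hm2 : m + 2 ≤ n) (hS : S ⊆ Finset.Icc 1 (n-1)) (hc : S.card = m) :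
    Equiv.Perm (Fin n) :=
  Equiv.ofBijective (fun i : Fin n => (⟨wrd n m S τ i, wrd_lt hm2 hS hc i.isLt⟩ : Fin n))
    ((Finite.injective_iff_bijective).mp (fun i j hij => by
      apply Fin.ext
      exact wrd_injOn hm2 hS hc i.isLt j.isLt (by simpa [Fin.ext_iff] using hij)))

lemma entry_buildPerm (hm2 : m + 2 ≤ n) (hS : S ⊆ Finset.Icc 1 (n-1)) (hc : S.card = m)
    {i : ℕ} (hi : i < n) : entry (buildPerm (τ := τ) hm2 hS hc) i = wrd n m S τ i := by
  simp only [entry, dif_pos hi, buildPerm, Equiv.ofBijective_apply]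

end Build
section Transfer

variable {n m : ℕ} {S : Finset ℕ} {τ : Equiv.Perm (Fin m)}

lemma sorted_le_getD {L : List ℕ} (hL : L.Pairwise (· < ·)) :
    ∀ i, i < L.length → i ≤ L.getD i 0 := by
  intro i
  induction i with
  | zero => intro _; omega
  | succ p ih =>
    intro hp
    have h1 := ih (by omega)
    have h2 := sorted_getD_lt hL hp (Nat.lt_succ_self p)
    omega

lemma not_runStart_left (hm2 : m + 2 ≤ n) (hS : S ⊆ Finset.Icc 1 (n-1)) (hc : S.card = m)
    {i : ℕ} (h0 : 0 < i) (hi : i < n - m) : ¬ WordRunStart (wrd n m S τ) i := by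
  intro h
  rcases h with h | h
  · omega
  · rw [wrd_left hi, wrd_left (by omega : i - 1 < n - m)] at h
    have := sorted_getD_lt (cList_sorted (n := n) (S := S))
      (by rw [cList_length hm2 hS hc]; omega) (by omega : i - 1 < i)
    omega

lemma runStart_shift_iff (hm2 : m + 2 ≤ n) (hc : S.card = m)
    (hB : wrd n m S τ (n - m) < wrd n m S τ (n - m - 1)) {j : ℕ} (hj : j < m) :
    (WordRunStart (wrd n m S τ) (n - m + j) ↔ WordRunStart (entry τ) j) := by
  rcases Nat.eq_zero_or_pos j with rfl | hjp
  · apply iff_of_true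
    · right
      simpa using hB
    · exact Or.inl rfl
  · unfold WordRunStart
    have e1 : n - m + j - (n - m) = j := by omega
    have e2 : n - m + j - 1 = n - m + (j - 1) := by omega
    have e3 : n - m + (j - 1) - (n - m) = j - 1 := by omega
    rw [wrd_right (by omega : n - m ≤ n - m + j), e2,
      wrd_right (by omega : n - m ≤ n - m + (j - 1)), e1, e3]
    have l1 : entry τ j < (sList S).length := by rw [sList_length hc]; exact entry_lt τ hj
    have l2 : entry τ (j - 1) < (sList S).length := by
      rw [sList_length hc]; exact entry_lt τ (by omega)
    rw [sorted_getD_lt_iff sList_sorted l1 l2]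
    constructor
    · rintro (h | h)
      · omega
      · exact Or.inr h
    · rintro (h | h)
      · omega
      · exact Or.inr h

lemma runs_shift (hm2 : m + 2 ≤ n) (hS : S ⊆ Finset.Icc 1 (n-1)) (hc : S.card = m)
    (hB : wrd n m S τ (n - m) < wrd n m S τ (n - m - 1)) :
    wordRuns (wrd n m S τ) n = wordRuns (entry τ) m + 1 := by
  unfold wordRuns
  have hset : (Finset.range n).filter (fun i => WordRunStart (wrd n m S τ) i) =
      insert 0 (((Finset.range m).filter (fun j => WordRunStart (entry τ) j)).image
        (fun j => n - m + j)) := by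
    ext i
    simp only [Finset.mem_filter, Finset.mem_range, Finset.mem_insert, Finset.mem_image]
    constructor
    · rintro ⟨hi, hrs⟩
      rcases Nat.eq_zero_or_pos i with rfl | hip
      · exact Or.inl rfl
      · right
        have hge : n - m ≤ i := by
          by_contra hlt
          exact not_runStart_left hm2 hS hc hip (by omega) hrs
        refine ⟨i - (n - m), ⟨by omega, ?_⟩, by omega⟩
        have : n - m + (i - (n - m)) = i := by omega
        rw [← runStart_shift_iff hm2 hc hB (by omega : i - (n - m) < m), this]
        exact hrs
    · rintro (rfl | ⟨j, ⟨hj, hrs⟩, rfl⟩)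
      · exact ⟨by omega, Or.inl rfl⟩
      · exact ⟨by omega, (runStart_shift_iff hm2 hc hB hj).mpr hrs⟩
  rw [hset, Finset.card_insert_of_notMem (by
      simp only [Finset.mem_image, Finset.mem_filter, Finset.mem_range]
      rintro ⟨j, _, hj⟩
      omega),
    Finset.card_image_of_injective _ (fun a b hab => by omega)]

lemma wrd_flattened_iff (hm2 : m + 2 ≤ n) (hS : S ⊆ Finset.Icc 1 (n-1)) (hc : S.card = m)
    (hB : wrd n m S τ (n - m) < wrd n m S τ (n - m - 1)) :
    (WordFlattened (wrd n m S τ) n ↔ WordFlattened (entry τ) m) := by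
  constructor
  · intro H a ha b hb ra rb hab
    have h1 := (runStart_shift_iff hm2 hc hB ha).mpr ra
    have h2 := (runStart_shift_iff hm2 hc hB hb).mpr rb
    have h3 := H (n - m + a) (by omega) (n - m + b) (by omega) h1 h2 (by omega)
    rw [wrd_right (by omega : n - m ≤ n - m + a),
      wrd_right (by omega : n - m ≤ n - m + b)] at h3
    simp only [Nat.add_sub_cancel_left] at h3
    have l1 : entry τ a < (sList S).length := by rw [sList_length hc]; exact entry_lt τ ha
    have l2 : entry τ b < (sList S).length := by rw [sList_length hc]; exact entry_lt τ hb
    exact (sorted_getD_lt_iff sList_sorted l1 l2).mp h3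
  · intro H i hi j hj ri rj hij
    have hjne : 0 < j := by omega
    have hj' : n - m ≤ j := by
      by_contra hlt
      exact not_runStart_left hm2 hS hc hjne (by omega) rj
    rcases Nat.eq_zero_or_pos i with rfl | hip
    · rw [wrd_left (by omega : 0 < n - m), cList_getD_zero hm2 hS hc]
      have hmem := hS (wrd_right_mem (τ := τ) hm2 hc hj' hj)
      rw [Finset.mem_Icc] at hmem
      omega
    · have hi' : n - m ≤ i := by
        by_contra hlt
        exact not_runStart_left hm2 hS hc hip (by omega) ri
      have ea : n - m + (i - (n - m)) = i := by omega
      have eb : n - m + (j - (n - m)) = j := by omega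
      have ra' : WordRunStart (entry τ) (i - (n - m)) := by
        rw [← runStart_shift_iff hm2 hc hB (by omega : i - (n - m) < m), ea]; exact ri
      have rb' : WordRunStart (entry τ) (j - (n - m)) := by
        rw [← runStart_shift_iff hm2 hc hB (by omega : j - (n - m) < m), eb]; exact rj
      have h3 := H (i - (n - m)) (by omega) (j - (n - m)) (by omega) ra' rb' (by omega)
      rw [wrd_right hi', wrd_right hj']
      exact sorted_getD_lt sList_sorted
        (by rw [sList_length hc]; exact entry_lt τ (by omega)) h3

lemma minS_lt_maxC (hm1 : 1 ≤ m) (hm2 : m + 2 ≤ n) (hS : S ⊆ Finset.Icc 1 (n-1))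
    (hc : S.card = m) (hne : S ≠ Finset.Icc (n - m) (n - 1)) :
    (sList S).getD 0 0 < (cList n S).getD (n - m - 1) 0 := by
  by_contra hcon
  push_neg at hcon
  have hslen : (0 : ℕ) < (sList S).length := by rw [sList_length hc]; omega
  have hclen : n - m - 1 < (cList n S).length := by rw [cList_length hm2 hS hc]; omega
  have hsmem : (sList S).getD 0 0 ∈ S := sList_getD_mem hc (by omega)
  have hcmem : (cList n S).getD (n - m - 1) 0 ∈ Finset.range n \ S :=
    cList_getD_mem hm2 hS hc (by omega)
  have hlt : (cList n S).getD (n - m - 1) 0 < (sList S).getD 0 0 := by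
    rcases Nat.lt_or_ge ((cList n S).getD (n - m - 1) 0) ((sList S).getD 0 0) with h | h
    · exact h
    · exfalso
      have : (cList n S).getD (n - m - 1) 0 = (sList S).getD 0 0 := by omega
      rw [this] at hcmem
      rw [Finset.mem_sdiff] at hcmem
      exact hcmem.2 hsmem
  have hmax : n - m - 1 ≤ (cList n S).getD (n - m - 1) 0 :=
    sorted_le_getD cList_sorted _ hclen
  -- every element of S is at least the minimum
  have hminle : ∀ x ∈ S, (sList S).getD 0 0 ≤ x := by
    intro x hx
    have hx' : x ∈ sList S := by unfold sList; rwa [Finset.mem_sort]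
    obtain ⟨j, hjlen, hjeq⟩ := List.mem_iff_getElem.mp hx'
    rcases Nat.eq_zero_or_pos j with rfl | hjp
    · rw [← hjeq, List.getD_eq_getElem _ _ hjlen]
    · have := sorted_getD_lt (sList_sorted (S := S)) hjlen hjp
      rw [List.getD_eq_getElem _ _ hjlen, hjeq] at this
      omega
  have hsub : Finset.range (n - m) ⊆ Finset.range n \ S := by
    intro x hx
    rw [Finset.mem_range] at hx
    rw [Finset.mem_sdiff, Finset.mem_range]
    refine ⟨by omega, fun hxS => ?_⟩
    have := hminle x hxS
    omega
  have hCeq : Finset.range (n - m) = Finset.range n \ S :=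
    Finset.eq_of_subset_of_card_le hsub
      (by rw [Finset.card_sdiff_of_subset (S_subset_range hm2 hS), Finset.card_range,
        Finset.card_range, hc])
  apply hne
  have hS' : Finset.range n \ (Finset.range n \ S) = S := by
    ext x
    simp only [Finset.mem_sdiff, Finset.mem_range, not_and, not_not]
    constructor
    · rintro ⟨h1, h2⟩
      exact h2 h1
    · intro hxS
      have hxr := S_subset_range hm2 hS hxS
      rw [Finset.mem_range] at hxr
      exact ⟨hxr, fun _ => hxS⟩
  rw [← hS', ← hCeq]
  ext x
  simp only [Finset.mem_sdiff, Finset.mem_range, Finset.mem_Icc]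
  omega

lemma B_of_flattened (hm1 : 1 ≤ m) (hm2 : m + 2 ≤ n) (hS : S ⊆ Finset.Icc 1 (n-1))
    (hc : S.card = m) (hτ : IsFlattened τ) (hne : S ≠ Finset.Icc (n - m) (n - 1)) :
    wrd n m S τ (n - m) < wrd n m S τ (n - m - 1) := by
  rw [wrd_right (le_refl (n - m)), wrd_left (by omega : n - m - 1 < n - m), Nat.sub_self,
    flattened_entry_zero τ (by omega) hτ]
  exact minS_lt_maxC hm1 hm2 hS hc hne

lemma wrd_image (hm2 : m + 2 ≤ n) (hc : S.card = m) (x : ℕ) :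
    (x ∈ S ↔ ∃ j < m, wrd n m S τ (n - m + j) = x) := by
  constructor
  · intro hx
    have hx' : x ∈ sList S := by unfold sList; rwa [Finset.mem_sort]
    obtain ⟨a, halen, haeq⟩ := List.mem_iff_getElem.mp hx'
    have ham : a < m := by rwa [sList_length hc] at halen
    refine ⟨(τ.symm ⟨a, ham⟩ : ℕ), (τ.symm ⟨a, ham⟩).isLt, ?_⟩
    rw [wrd_right (by omega : n - m ≤ n - m + (τ.symm ⟨a, ham⟩ : ℕ))]
    simp only [Nat.add_sub_cancel_left]
    have : entry τ ((τ.symm ⟨a, ham⟩ : ℕ)) = a := by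
      simp only [entry, dif_pos (τ.symm ⟨a, ham⟩).isLt, Fin.eta]
      simp
    rw [this, List.getD_eq_getElem _ _ halen, haeq]
  · rintro ⟨j, hj, rfl⟩
    exact wrd_right_mem hm2 hc (by omega) (by omega)

end Transfer
section Packaging

lemma buildPerm_mem {n k m : ℕ} {S : Finset ℕ} {τ : Equiv.Perm (Fin m)}
    (hm1 : 1 ≤ m) (hm2 : m + 2 ≤ n) (hS : S ⊆ Finset.Icc 1 (n-1)) (hc : S.card = m)
    (hne : S ≠ Finset.Icc (n - m) (n - 1)) (hτf : IsFlattened τ) (hτr : runCount τ = k - 1)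
    (hk : 1 ≤ k) :
    IsFlattened (buildPerm (τ := τ) hm2 hS hc) ∧ runCount (buildPerm (τ := τ) hm2 hS hc) = k := by
  have hent : ∀ i < n, entry (buildPerm (τ := τ) hm2 hS hc) i = wrd n m S τ i :=
    fun i hi => entry_buildPerm hm2 hS hc hi
  have hB := B_of_flattened hm1 hm2 hS hc hτf hne
  constructor
  · unfold IsFlattened
    rw [wordFlattened_congr hent]
    exact (wrd_flattened_iff hm2 hS hc hB).mpr hτf
  · unfold runCount
    rw [wordRuns_congr hent, runs_shift hm2 hS hc hB]
    unfold runCount at hτr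
    omega

lemma r_le {n m₁ m₂ : ℕ} {S₁ S₂ : Finset ℕ} {τ₁ : Equiv.Perm (Fin m₁)} {τ₂ : Equiv.Perm (Fin m₂)}
    (hm2₁ : m₁ + 2 ≤ n) (hm2₂ : m₂ + 2 ≤ n) (hS₂ : S₂ ⊆ Finset.Icc 1 (n-1)) (hc₂ : S₂.card = m₂)
    (hB₁ : wrd n m₁ S₁ τ₁ (n - m₁) < wrd n m₁ S₁ τ₁ (n - m₁ - 1))
    (heq : ∀ i < n, wrd n m₁ S₁ τ₁ i = wrd n m₂ S₂ τ₂ i) :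
    n - m₂ ≤ n - m₁ := by
  by_contra h
  push_neg at h
  have hrs : WordRunStart (wrd n m₁ S₁ τ₁) (n - m₁) := Or.inr hB₁
  rw [wordRunStart_congr heq (by omega : n - m₁ < n)] at hrs
  exact not_runStart_left hm2₂ hS₂ hc₂ (by omega) h hrs

lemma data_eq {n m : ℕ} {S₁ S₂ : Finset ℕ} {τ₁ τ₂ : Equiv.Perm (Fin m)}
    (hm2 : m + 2 ≤ n) (hc₁ : S₁.card = m) (hc₂ : S₂.card = m)
    (heq : ∀ i < n, wrd n m S₁ τ₁ i = wrd n m S₂ τ₂ i) : S₁ = S₂ ∧ τ₁ = τ₂ := by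
  have hSeq : S₁ = S₂ := by
    ext x
    rw [wrd_image hm2 hc₁ x, wrd_image hm2 hc₂ x]
    constructor
    · rintro ⟨j, hj, hx⟩
      exact ⟨j, hj, by rw [← heq _ (by omega)]; exact hx⟩
    · rintro ⟨j, hj, hx⟩
      exact ⟨j, hj, by rw [heq _ (by omega)]; exact hx⟩
  refine ⟨hSeq, ?_⟩
  apply Equiv.ext
  intro a
  have ha : (a : ℕ) < m := a.isLt
  have h1 := heq (n - m + a) (by omega)
  rw [wrd_right (by omega), wrd_right (by omega)] at h1
  simp only [Nat.add_sub_cancel_left] at h1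
  rw [hSeq] at h1
  have h2 : entry τ₁ (a : ℕ) = entry τ₂ (a : ℕ) :=
    sorted_getD_inj sList_sorted (by rw [sList_length hc₂]; exact entry_lt τ₁ ha)
      (by rw [sList_length hc₂]; exact entry_lt τ₂ ha) h1
  simp only [entry, dif_pos ha, Fin.eta] at h2
  exact Fin.val_injective h2

end Packaging
section Surj

lemma exists_data {n k : ℕ} (hk : 2 ≤ k) (hkn : k < n) (σ : Equiv.Perm (Fin n))
    (hf : IsFlattened σ) (hrc : runCount σ = k) :
    ∃ (m : ℕ) (S : Finset ℕ) (τ : Equiv.Perm (Fin m)),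
      ∃ (hm1 : 1 ≤ m) (hm2 : m + 2 ≤ n) (hS : S ⊆ Finset.Icc 1 (n-1)) (hc : S.card = m),
      S ≠ Finset.Icc (n - m) (n - 1) ∧ IsFlattened τ ∧ runCount τ = k - 1 ∧
      buildPerm (τ := τ) hm2 hS hc = σ := by
  have hn3 : 3 ≤ n := by omega
  -- there is a descent
  have hcard2 : 1 < ((Finset.range n).filter (fun i => WordRunStart (entry σ) i)).card := by
    unfold runCount wordRuns at hrc
    omega
  obtain ⟨d, hdmem, hdne⟩ : ∃ d ∈ (Finset.range n).filter (fun i => WordRunStart (entry σ) i),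
      d ≠ 0 := by
    obtain ⟨a, ha, b, hb, hab⟩ := Finset.one_lt_card.mp hcard2
    by_cases h : a = 0
    · exact ⟨b, hb, fun hb0 => hab (h.trans hb0.symm)⟩
    · exact ⟨a, ha, h⟩
  rw [Finset.mem_filter, Finset.mem_range] at hdmem
  have hdesc : entry σ d < entry σ (d - 1) := by
    rcases hdmem.2 with h | h
    · exact absurd h hdne
    · exact h
  have hex : ∃ d', 0 < d' ∧ d' < n ∧ entry σ d' < entry σ (d' - 1) :=
    ⟨d, by omega, hdmem.1, hdesc⟩
  set r := Nat.find hex with hrdef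
  obtain ⟨hr0, hrn, hrd⟩ := Nat.find_spec hex
  rw [← hrdef] at hr0 hrn hrd
  have hmin : ∀ i, i < r → ¬(0 < i ∧ i < n ∧ entry σ i < entry σ (i - 1)) :=
    fun i h => Nat.find_min hex h
  have hσ0 : entry σ 0 = 0 := flattened_entry_zero σ (by omega) hf
  have hasc : ∀ i, 0 < i → i < r → entry σ (i - 1) < entry σ i := by
    intro i h0 hir
    have hne := hmin i hir
    have h1 : ¬ entry σ i < entry σ (i - 1) := fun hlt => hne ⟨h0, by omega, hlt⟩
    have h2 : entry σ (i - 1) ≠ entry σ i := fun h => by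
      have := entry_injOn σ (by omega) (by omega) h
      omega
    omega
  have hr2 : 2 ≤ r := by
    by_contra h
    have hr1 : r = 1 := by omega
    rw [hr1] at hrd
    norm_num at hrd
    rw [hσ0] at hrd
    omega
  have hmono : ∀ j, j < r → ∀ i, i < j → entry σ i < entry σ j := by
    intro j
    induction j with
    | zero => intro _ i hi; omega
    | succ p ih =>
      intro hp i hi
      have hstep := hasc (p + 1) (by omega) hp
      simp only [Nat.add_sub_cancel] at hstep
      rcases Nat.lt_or_ge i p with h | h
      · exact lt_trans (ih (by omega) i h) hstep
      · have : i = p := by omega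
        subst this
        exact hstep
  set m := n - r with hmdef
  have hm1 : 1 ≤ m := by omega
  have hm2 : m + 2 ≤ n := by omega
  have hrm : n - m = r := by omega
  set S : Finset ℕ := (Finset.Ico r n).image (fun i => entry σ i) with hSdef
  have hmemS : ∀ x, x ∈ S ↔ ∃ i, r ≤ i ∧ i < n ∧ entry σ i = x := by
    intro x
    rw [hSdef]
    simp only [Finset.mem_image, Finset.mem_Ico]
    constructor
    · rintro ⟨i, ⟨h1, h2⟩, h3⟩
      exact ⟨i, h1, h2, h3⟩
    · rintro ⟨i, h1, h2, h3⟩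
      exact ⟨i, ⟨h1, h2⟩, h3⟩
  have hc : S.card = m := by
    rw [hSdef, Finset.card_image_of_injOn, Nat.card_Ico]
    intro i hi j hj h
    rw [Finset.mem_coe, Finset.mem_Ico] at hi hj
    exact entry_injOn σ hi.2 hj.2 h
  have hS : S ⊆ Finset.Icc 1 (n-1) := by
    intro x hx
    rw [hmemS] at hx
    obtain ⟨i, h1, h2, rfl⟩ := hx
    rw [Finset.mem_Icc]
    have hlt := entry_lt σ h2
    have hpos : entry σ i ≠ 0 := fun h => by
      have := entry_injOn σ h2 (by omega) (h.trans hσ0.symm)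
      omega
    omega
  have hmemsl : ∀ j, j < m → entry σ (r + j) ∈ sList S := by
    intro j hj
    unfold sList
    rw [Finset.mem_sort, hmemS]
    exact ⟨r + j, by omega, by omega, rfl⟩
  set t : Fin m → Fin m := fun j => ⟨(sList S).idxOf (entry σ (r + j)), by
    have h1 := List.idxOf_lt_length_iff.mpr (hmemsl j j.isLt)
    rwa [sList_length hc] at h1⟩ with htdef
  have htinj : Function.Injective t := by
    intro a b hab
    have h1 : (sList S).idxOf (entry σ (r + a)) = (sList S).idxOf (entry σ (r + b)) := by
      have := congrArg Fin.val hab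
      simpa [htdef] using this
    have h2 : entry σ (r + a) = entry σ (r + b) :=
      (List.idxOf_inj (hmemsl a a.isLt)).mp h1
    have := entry_injOn σ (by omega) (by omega) h2
    exact Fin.ext (by omega)
  set τ : Equiv.Perm (Fin m) := Equiv.ofBijective t (Finite.injective_iff_bijective.mp htinj)
    with hτdef
  have hτval : ∀ j, (hj : j < m) → entry τ j = (sList S).idxOf (entry σ (r + j)) := by
    intro j hj
    simp only [entry, dif_pos hj, hτdef, Equiv.ofBijective_apply, htdef]
  set L : List ℕ := (List.range r).map (fun i => entry σ i) with hLdef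
  have hLlen : L.length = r := by simp [hLdef]
  have hLnodup : L.Nodup := by
    rw [hLdef]
    refine (List.nodup_range (n := r)).map_on ?_
    intro x hx y hy hxy
    rw [List.mem_range] at hx hy
    exact entry_injOn σ (by omega) (by omega) hxy
  have hLtoF : L.toFinset = Finset.range n \ S := by
    ext x
    simp only [List.mem_toFinset, hLdef, List.mem_map, List.mem_range, Finset.mem_sdiff,
      Finset.mem_range]
    constructor
    · rintro ⟨i, hir, rfl⟩
      refine ⟨entry_lt σ (by omega), fun hxS => ?_⟩
      rw [hmemS] at hxS
      obtain ⟨j, hj1, hj2, hj3⟩ := hxS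
      have := entry_injOn σ hj2 (by omega) hj3
      omega
    · rintro ⟨hxn, hxS⟩
      set p : Fin n := σ.symm ⟨x, hxn⟩ with hpdef
      have hpx : entry σ (p : ℕ) = x := by
        simp only [entry, dif_pos p.isLt, Fin.eta, hpdef]
        simp
      have hpr : (p : ℕ) < r := by
        by_contra hge
        apply hxS
        rw [hmemS]
        exact ⟨(p : ℕ), by omega, p.isLt, hpx⟩
      exact ⟨(p : ℕ), hpr, hpx⟩
  have hLsorted : L.Pairwise (· < ·) := by
    apply List.pairwise_iff_getElem.mpr
    intro i j hi hj hij
    rw [hLlen] at hi hj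
    have gi : L[i]'(by rw [hLlen]; omega) = entry σ i := by
      simp [hLdef]
    have gj : L[j]'(by rw [hLlen]; omega) = entry σ j := by
      simp [hLdef]
    rw [gi, gj]
    exact hmono j hj i hij
  have hcs : cList n S = L := by
    have h1 : L.toFinset.sort (· ≤ ·) = L :=
      (List.toFinset_sort (· ≤ ·) hLnodup).mpr (hLsorted.imp le_of_lt)
    unfold cList
    rw [← hLtoF]
    exact h1
  have hwrd : ∀ i, i < n → wrd n m S τ i = entry σ i := by
    intro i hi
    rcases Nat.lt_or_ge i (n - m) with h | h
    · rw [wrd_left h, hcs]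
      rw [List.getD_eq_getElem _ _ (by rw [hLlen]; omega)]
      simp [hLdef]
    · rw [wrd_right h]
      have hjm : i - (n - m) < m := by omega
      rw [hτval _ hjm]
      have hre : r + (i - (n - m)) = i := by omega
      rw [hre]
      have hmem : entry σ i ∈ sList S := by
        rw [← hre]
        exact hmemsl _ hjm
      rw [List.getD_eq_getElem _ _ (List.idxOf_lt_length_iff.mpr hmem)]
      exact List.getElem_idxOf _
  have hne : S ≠ Finset.Icc (n - m) (n - 1) := by
    intro hEq
    have h1 : entry σ r ∈ S := by
      rw [hmemS]
      exact ⟨r, le_refl r, hrn, rfl⟩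
    rw [hEq, Finset.mem_Icc] at h1
    have h2 : entry σ (r - 1) ∉ S := by
      rw [hmemS]
      rintro ⟨j, hj1, hj2, hj3⟩
      have := entry_injOn σ hj2 (by omega) hj3
      omega
    rw [hEq, Finset.mem_Icc] at h2
    push_neg at h2
    have h3 : entry σ (r - 1) < n := entry_lt σ (by omega)
    rcases Nat.lt_or_ge (entry σ (r - 1)) (n - m) with h4 | h4
    · omega
    · have := h2 h4
      omega
  have hB : wrd n m S τ (n - m) < wrd n m S τ (n - m - 1) := by
    rw [hrm, hwrd _ (by omega), hwrd _ (by omega)]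
    exact hrd
  have hwflat : WordFlattened (wrd n m S τ) n := (wordFlattened_congr hwrd).mpr hf
  have hτf : IsFlattened τ := (wrd_flattened_iff hm2 hS hc hB).mp hwflat
  have hτr : runCount τ = k - 1 := by
    have h1 := wordRuns_congr (n := n) hwrd
    have h2 := runs_shift hm2 hS hc hB
    have h3 : runCount σ = wordRuns (entry σ) n := rfl
    have h4 : runCount τ = wordRuns (entry τ) m := rfl
    omega
  refine ⟨m, S, τ, hm1, hm2, hS, hc, hne, hτf, hτr, ?_⟩
  apply Equiv.ext
  intro i
  apply Fin.ext
  have hbp : ((buildPerm (τ := τ) hm2 hS hc) i : ℕ) = wrd n m S τ (i : ℕ) := rfl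
  rw [hbp, hwrd _ i.isLt]
  simp only [entry, dif_pos i.isLt, Fin.eta]

end Surj
section Main

/-- The indexing finset for the right-hand side. -/
def TSet (n k : ℕ) : Finset ((m : ℕ) × (Finset ℕ × Equiv.Perm (Fin m))) :=
  (Finset.Icc 1 (n - 2)).sigma fun m =>
    (((Finset.Icc 1 (n - 1)).powersetCard m).erase (Finset.Icc (n - m) (n - 1))) ×ˢ
      flatSet m (k - 1)

lemma mem_TSet_iff {n k : ℕ} {a : (m : ℕ) × (Finset ℕ × Equiv.Perm (Fin m))} :
    a ∈ TSet n k ↔ (1 ≤ a.1 ∧ a.1 ≤ n - 2) ∧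
      (a.2.1 ≠ Finset.Icc (n - a.1) (n - 1) ∧ a.2.1 ⊆ Finset.Icc 1 (n - 1) ∧ a.2.1.card = a.1) ∧
      (IsFlattened a.2.2 ∧ runCount a.2.2 = k - 1) := by
  unfold TSet
  rw [Finset.mem_sigma, Finset.mem_Icc, Finset.mem_product, Finset.mem_erase,
    Finset.mem_powersetCard]
  unfold flatSet
  rw [Finset.mem_filter]
  simp only [Finset.mem_univ, true_and]

lemma mem_TSet_iff' {n k m : ℕ} {S : Finset ℕ} {τ : Equiv.Perm (Fin m)} :
    (⟨m, (S, τ)⟩ : (m : ℕ) × (Finset ℕ × Equiv.Perm (Fin m))) ∈ TSet n k ↔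
      (1 ≤ m ∧ m ≤ n - 2) ∧
      (S ≠ Finset.Icc (n - m) (n - 1) ∧ S ⊆ Finset.Icc 1 (n - 1) ∧ S.card = m) ∧
      (IsFlattened τ ∧ runCount τ = k - 1) :=
  mem_TSet_iff

lemma card_TSet {n k : ℕ} (hn : 3 ≤ n) :
    (TSet n k).card = ∑ m ∈ Finset.Icc 1 (n - 2), (Nat.choose (n - 1) m - 1) * f m (k - 1) := by
  unfold TSet
  rw [Finset.card_sigma]
  apply Finset.sum_congr rfl
  intro m hm
  rw [Finset.mem_Icc] at hm
  rw [Finset.card_product]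
  have hmem : Finset.Icc (n - m) (n - 1) ∈ (Finset.Icc 1 (n - 1)).powersetCard m := by
    rw [Finset.mem_powersetCard]
    constructor
    · intro x hx
      rw [Finset.mem_Icc] at hx ⊢
      omega
    · rw [Nat.card_Icc]
      omega
  rw [Finset.card_erase_of_mem hmem, Finset.card_powersetCard, Nat.card_Icc]
  have h1 : n - 1 + 1 - 1 = n - 1 := by omega
  rw [h1]
  rfl

theorem f_recurrence_choose (n k : ℕ) (hk : 2 ≤ k) (hkn : k < n) :
    f n k = ∑ m ∈ Finset.Icc 1 (n - 2), (Nat.choose (n - 1) m - 1) * f m (k - 1) := by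
  have hn3 : 3 ≤ n := by omega
  rw [← card_TSet (k := k) hn3]
  unfold f
  refine (Finset.card_bij
    (fun a ha => buildPerm (n := n) (m := a.1) (S := a.2.1) (τ := a.2.2)
      (by obtain ⟨⟨h1, h2⟩, -, -⟩ := mem_TSet_iff.mp ha; omega)
      ((mem_TSet_iff.mp ha).2.1.2.1)
      ((mem_TSet_iff.mp ha).2.1.2.2))
    ?_ ?_ ?_).symm
  · -- maps into flatSet n k
    intro a ha
    obtain ⟨⟨h1, h2⟩, ⟨hne, hS, hc⟩, hτf, hτr⟩ := mem_TSet_iff.mp ha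
    unfold flatSet
    rw [Finset.mem_filter]
    exact ⟨Finset.mem_univ _,
      buildPerm_mem h1 (by omega) hS hc hne hτf hτr (by omega)⟩
  · -- injectivity
    rintro ⟨m₁, S₁, τ₁⟩ ha₁ ⟨m₂, S₂, τ₂⟩ ha₂ heqp
    obtain ⟨⟨h1₁, h2₁⟩, ⟨hne₁, hS₁, hc₁⟩, hτf₁, hτr₁⟩ := mem_TSet_iff'.mp ha₁
    obtain ⟨⟨h1₂, h2₂⟩, ⟨hne₂, hS₂, hc₂⟩, hτf₂, hτr₂⟩ := mem_TSet_iff'.mp ha₂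
    have hm2₁ : m₁ + 2 ≤ n := by omega
    have hm2₂ : m₂ + 2 ≤ n := by omega
    have heqw : ∀ i < n, wrd n m₁ S₁ τ₁ i = wrd n m₂ S₂ τ₂ i := by
      intro i hi
      have h3 : entry (buildPerm (τ := τ₁) hm2₁ hS₁ hc₁) i =
          entry (buildPerm (τ := τ₂) hm2₂ hS₂ hc₂) i :=
        congrArg (fun s => entry s i) heqp
      rw [entry_buildPerm hm2₁ hS₁ hc₁ hi, entry_buildPerm hm2₂ hS₂ hc₂ hi] at h3
      exact h3
    have hB₁ := B_of_flattened h1₁ hm2₁ hS₁ hc₁ hτf₁ hne₁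
    have hB₂ := B_of_flattened h1₂ hm2₂ hS₂ hc₂ hτf₂ hne₂
    have hr12 := r_le hm2₁ hm2₂ hS₂ hc₂ hB₁ heqw
    have hr21 := r_le hm2₂ hm2₁ hS₁ hc₁ hB₂ (fun i hi => (heqw i hi).symm)
    have hmeq : m₁ = m₂ := by omega
    subst hmeq
    obtain ⟨hSeq, hτeq⟩ := data_eq hm2₁ hc₁ hc₂ heqw
    subst hSeq
    subst hτeq
    rfl
  · -- surjectivity
    intro b hb
    unfold flatSet at hb
    rw [Finset.mem_filter] at hb
    obtain ⟨-, hbf, hbr⟩ := hb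
    obtain ⟨m, S, τ, hm1, hm2, hS, hc, hne, hτf, hτr, hbp⟩ := exists_data hk hkn b hbf hbr
    refine ⟨⟨m, (S, τ)⟩, mem_TSet_iff'.mpr ⟨⟨hm1, by omega⟩, ⟨hne, hS, hc⟩, hτf, hτr⟩, ?_⟩
    exact hbp

end Main
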